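/- Let R be a commutative ring with pR = 0, let n ≥ 1, let L₁,…,Lₙ be rank-1 free R-modules with maps Πᵢ : Lᵢ → L_{i+1} (cyclically) satisfying Πₙ∘⋯∘Π₁ = 0, L = ⊕ Lᵢ, Π the induced degree-one endomorphism. Let v₀, v₁, …, v_{n−1} be 'diagonal' endomorphisms of L (preserving each Lᵢ). Then det(v₀ + v₁Π + v₂Π² + ⋯ + v_{n−1}Π^{n−1}) = det(v₀). -/

import Mathlib

open Finset

/-- The degree-one cyclic shift endomorphism of `L = ⊕_{i ∈ ℤ/n} L i` determined by a
family of maps `P i : L (i-1) → L i`. -/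
noncomputable def cyclicShift {R : Type*} [CommRing R] {n : ℕ} {L : ZMod n → Type*}
    [∀ i, AddCommGroup (L i)] [∀ i, Module R (L i)]
    (P : ∀ i : ZMod n, L (i - 1) →ₗ[R] L i) : Module.End R (∀ i, L i) :=
  LinearMap.pi fun i => (P i).comp (LinearMap.proj (i - 1))

/-- The diagonal endomorphism of `L = ⊕_{i ∈ ℤ/n} L i` acting on `L i` by the scalar `w i`. -/
noncomputable def diagEnd {R : Type*} [CommRing R] {n : ℕ} {L : ZMod n → Type*}
    [∀ i, AddCommGroup (L i)] [∀ i, Module R (L i)]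
    (w : ZMod n → R) : Module.End R (∀ i, L i) :=
  LinearMap.pi fun i => w i • LinearMap.proj i

section Aux

variable {n : ℕ} [NeZero n] {R : Type*} [CommRing R]

private lemma zval_sub (x y : ZMod n) :
    (x - y).val = if y.val ≤ x.val then x.val - y.val else x.val + n - y.val := by
  split_ifs with h
  · exact ZMod.val_sub h
  · push_neg at h
    have h1 : (y - x).val = y.val - x.val := ZMod.val_sub h.le
    have h2 : y - x ≠ 0 := by
      intro he
      rw [he, ZMod.val_zero] at h1
      omega
    have : NeZero (y - x) := ⟨h2⟩
    have h3 : (-(y - x)).val = n - (y - x).val := ZMod.val_neg_of_ne_zero _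
    rw [show x - y = -(y - x) by ring, h3, h1]
    have := ZMod.val_lt y
    omega

private lemma cover (σ : Equiv.Perm (ZMod n)) (hσ : σ ≠ 1) (t : ZMod n) :
    ∃ i, (σ i - t).val < (σ i - i).val := by
  by_contra hc
  push_neg at hc
  apply hσ
  have key : ∀ i : ZMod n, (i - t).val ≤ (σ i - t).val := by
    intro i
    have h := hc i
    have e1 := zval_sub (σ i) i
    have e2 := zval_sub (σ i) t
    have e3 := zval_sub i t
    have l1 := ZMod.val_lt (σ i)
    have l2 := ZMod.val_lt i
    have l3 := ZMod.val_lt t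
    split_ifs at e1 e2 e3 <;> omega
  have hsum : ∑ i : ZMod n, (σ i - t).val = ∑ i : ZMod n, (i - t).val :=
    Equiv.sum_comp σ (fun i => (i - t).val)
  have heq := (Finset.sum_eq_sum_iff_of_le (fun i _ => key i)).mp hsum.symm
  ext i
  have h2 : (i - t).val = (σ i - t).val := heq i (mem_univ i)
  have h3 : i - t = σ i - t := ZMod.val_injective n h2
  simpa using (sub_left_inj.mp h3).symm

/-- The weighted cyclic shift matrix. -/
private def shiftM (a : ZMod n → R) : Matrix (ZMod n) (ZMod n) R :=
  Matrix.of fun i k => if k = i - 1 then a i else 0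

private lemma shiftM_pow (a : ZMod n → R) (j : ℕ) (i k : ZMod n) :
    (shiftM a ^ j) i k =
      if k = i - (j : ZMod n) then (∏ s ∈ range j, a (i - (s : ZMod n))) else 0 := by
  induction j generalizing k with
  | zero => simp [Matrix.one_apply, eq_comm]
  | succ j ih =>
    rw [pow_succ, Matrix.mul_apply]
    rw [Finset.sum_eq_single (i - (j : ZMod n))]
    · rw [ih, if_pos rfl]
      simp only [shiftM, Matrix.of_apply]
      rw [show i - ((j + 1 : ℕ) : ZMod n) = i - (j : ZMod n) - 1 by push_cast; ring,
        prod_range_succ]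
      split_ifs with h
      · rfl
      · rw [mul_zero]
    · intro b _ hb
      rw [ih, if_neg hb, zero_mul]
    · simp

private lemma sumM_entry (a : ZMod n → R) (v : ℕ → ZMod n → R) (i k : ZMod n) :
    (∑ j ∈ range n, Matrix.diagonal (v j) * shiftM a ^ j) i k
      = v (i - k).val i * ∏ s ∈ range (i - k).val, a (i - (s : ZMod n)) := by
  rw [Matrix.sum_apply]
  have hterm : ∀ j ∈ range n,
      (Matrix.diagonal (v j) * shiftM a ^ j) i k
        = if j = (i - k).val then v j i * ∏ s ∈ range j, a (i - (s : ZMod n)) else 0 := by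
    intro j hj
    rw [Matrix.diagonal_mul, shiftM_pow]
    have hiff : k = i - (j : ZMod n) ↔ j = (i - k).val := by
      constructor
      · rintro rfl
        rw [show i - (i - (j : ZMod n)) = (j : ZMod n) by ring,
          ZMod.val_cast_of_lt (mem_range.mp hj)]
      · rintro rfl
        rw [ZMod.natCast_val, ZMod.cast_id]
        ring
    split_ifs with h1 h2 h2
    · rfl
    · exact absurd (hiff.mp h1) h2
    · exact absurd (hiff.mpr h2) h1
    · exact mul_zero _
  rw [Finset.sum_congr rfl hterm, Finset.sum_ite_eq' (range n) ((i - k).val)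
    (fun j => v j i * ∏ s ∈ range j, a (i - (s : ZMod n))),
    if_pos (mem_range.mpr (ZMod.val_lt _))]

private lemma arc_prod_eq_zero (a : ZMod n → R) (hc : ∏ t : ZMod n, a t = 0)
    (σ : Equiv.Perm (ZMod n)) (hσ : σ ≠ 1) :
    ∏ i : ZMod n, ∏ s ∈ range ((σ i - i).val), a (σ i - (s : ZMod n)) = 0 := by
  choose w hw using cover σ hσ
  set f : (Σ _ : ZMod n, ℕ) → R := fun x => a (σ x.1 - (x.2 : ZMod n)) with hf
  have hsig : ∏ i : ZMod n, ∏ s ∈ range ((σ i - i).val), a (σ i - (s : ZMod n))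
      = ∏ x ∈ univ.sigma (fun i => range ((σ i - i).val)), f x := by
    rw [Finset.prod_sigma]
  set φ : ZMod n → (Σ _ : ZMod n, ℕ) := fun t => ⟨w t, (σ (w t) - t).val⟩ with hφ
  have hrec : ∀ t, σ (φ t).1 - ((φ t).2 : ZMod n) = t := by
    intro t
    simp only [hφ]
    rw [ZMod.natCast_val, ZMod.cast_id]
    ring
  have hinj : Set.InjOn φ (univ : Finset (ZMod n)) := by
    intro t _ t' _ h
    have := congrArg (fun x : (Σ _ : ZMod n, ℕ) => σ x.1 - ((x.2 : ℕ) : ZMod n)) h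
    simpa [hrec t, hrec t'] using this
  have hdvd : (∏ t : ZMod n, a t) ∣
      ∏ x ∈ univ.sigma (fun i => range ((σ i - i).val)), f x := by
    have h1 : ∏ t : ZMod n, a t = ∏ x ∈ Finset.image φ univ, f x := by
      rw [Finset.prod_image hinj]
      refine Finset.prod_congr rfl fun t _ => ?_
      rw [hf]
      simp only
      rw [hrec t]
    rw [h1]
    refine Finset.prod_dvd_prod_of_subset _ _ _ ?_
    intro x hx
    obtain ⟨t, _, rfl⟩ := Finset.mem_image.mp hx
    exact Finset.mem_sigma.mpr ⟨mem_univ _, mem_range.mpr (hw t)⟩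
  rw [hsig]
  rw [hc] at hdvd
  exact zero_dvd_iff.mp hdvd

private lemma det_sum (a : ZMod n → R) (v : ℕ → ZMod n → R) (hc : ∏ t : ZMod n, a t = 0) :
    (∑ j ∈ range n, Matrix.diagonal (v j) * shiftM a ^ j).det = ∏ i : ZMod n, v 0 i := by
  rw [Matrix.det_apply]
  rw [Finset.sum_eq_single (1 : Equiv.Perm (ZMod n))]
  · simp only [Equiv.Perm.sign_one, one_smul, Equiv.Perm.one_apply, sumM_entry]
    refine Finset.prod_congr rfl fun i _ => ?_
    simp
  · intro σ _ hσ
    have hz : ∏ i : ZMod n, (∑ j ∈ range n, Matrix.diagonal (v j) * shiftM a ^ j) (σ i) i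
        = 0 := by
      simp only [sumM_entry]
      rw [Finset.prod_mul_distrib, arc_prod_eq_zero a hc σ hσ, mul_zero]
    rw [hz, smul_zero]
  · simp

private lemma prod_range_zmod (g : ZMod n → R) :
    ∏ s ∈ range n, g ((s : ℕ) : ZMod n) = ∏ t : ZMod n, g t := by
  refine Finset.prod_nbij' (fun s => ((s : ℕ) : ZMod n)) (fun t => t.val) ?_ ?_ ?_ ?_ ?_
  · intro s _; exact mem_univ _
  · intro t _; exact mem_range.mpr (ZMod.val_lt t)
  · intro s hs; exact ZMod.val_cast_of_lt (mem_range.mp hs)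
  · intro t _; show ((t.val : ℕ) : ZMod n) = t; rw [ZMod.natCast_val, ZMod.cast_id]
  · intro s _; rfl

end Aux

/-- Let `R` be a commutative ring with `pR = 0`, `L₁, …, Lₙ` rank-one free `R`-modules with
cyclic maps `Πᵢ : Lᵢ → L_{i+1}` whose composite around the cycle vanishes, `Π` the induced
degree-one endomorphism of `L = ⊕ᵢ Lᵢ`, and `v₀, …, v_{n-1}` diagonal endomorphisms of `L`.
Then `det (v₀ + v₁Π + ⋯ + v_{n-1}Π^{n-1}) = det v₀`. -/
theorem stmt4 (p : ℕ) (hp : p.Prime) (R : Type*) [CommRing R] (hchar : (p : R) = 0)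
    (n : ℕ) [NeZero n] (L : ZMod n → Type*)
    [∀ i, AddCommGroup (L i)] [∀ i, Module R (L i)]
    [∀ i, Module.Free R (L i)] [∀ i, Module.Finite R (L i)]
    (hrank : ∀ i, Module.finrank R (L i) = 1)
    (P : ∀ i : ZMod n, L (i - 1) →ₗ[R] L i)
    (hcomp : ∀ x : L 0, (cyclicShift P ^ n) (Pi.single (0 : ZMod n) x) = 0)
    (v : ℕ → ZMod n → R) :
    LinearMap.det (∑ j ∈ Finset.range n, diagEnd (v j) * cyclicShift P ^ j) =
      LinearMap.det (diagEnd (L := L) (v 0)) := by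
  classical
  rcases subsingleton_or_nontrivial R with hR | hR
  · exact Subsingleton.elim _ _
  -- bases
  let b : ∀ i, Module.Basis (Fin 1) R (L i) := fun i => Module.finBasisOfFinrankEq R (L i) (hrank i)
  let e : ∀ i, L i := fun i => b i 0
  have hx : ∀ (i) (x : L i), x = ((b i).repr x) 0 • e i := by
    intro i x
    have h := (b i).sum_repr x
    rw [Fin.sum_univ_one] at h
    exact h.symm
  let a : ZMod n → R := fun i => ((b i).repr (P i (e (i - 1)))) 0
  have hP : ∀ i, P i (e (i - 1)) = a i • e i := fun i => hx i _
  let B : Module.Basis (ZMod n) R (∀ i, L i) :=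
    (Pi.basis b).reindex (Equiv.sigmaUnique _ _)
  have hB : ∀ i, B i = Pi.single i (e i) := by
    intro i
    rw [Module.Basis.reindex_apply, Pi.basis_apply]
    rfl
  -- action on basis vectors
  have key : ∀ j : ZMod n, cyclicShift P (B (j - 1)) = a j • B j := by
    intro j
    rw [hB, hB]
    funext m
    simp only [cyclicShift, LinearMap.pi_apply, LinearMap.comp_apply, LinearMap.proj_apply,
      Pi.smul_apply]
    by_cases hm : m = j
    · subst hm
      rw [Pi.single_eq_same, Pi.single_eq_same, hP]
    · have hm1 : m - 1 ≠ j - 1 := fun h => hm (by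
        have := congrArg (· + 1) h
        simpa using this)
      rw [Pi.single_eq_of_ne hm1, Pi.single_eq_of_ne hm, map_zero, smul_zero]
  have keyD : ∀ (w : ZMod n → R) (i : ZMod n), diagEnd (L := L) w (B i) = w i • B i := by
    intro w i
    rw [hB]
    funext m
    simp only [diagEnd, LinearMap.pi_apply, LinearMap.smul_apply, LinearMap.proj_apply,
      Pi.smul_apply]
    by_cases hm : m = i
    · subst hm; simp
    · simp [Pi.single_eq_of_ne hm]
  -- identification with matrices
  have hTL : ∀ N : Matrix (ZMod n) (ZMod n) R,
      Matrix.toLin B B N = Matrix.toLinAlgEquiv B N := fun N => rfl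
  have hshift : cyclicShift P = Matrix.toLin B B (shiftM a) := by
    refine B.ext fun k => ?_
    rw [Matrix.toLin_self]
    have hk := key (k + 1)
    rw [add_sub_cancel_right] at hk
    rw [hk, Finset.sum_eq_single (k + 1)]
    · rw [shiftM]
      simp only [Matrix.of_apply]
      rw [if_pos (by ring)]
    · intro i _ hi
      rw [shiftM]
      simp only [Matrix.of_apply]
      rw [if_neg (fun h => hi (by rw [eq_sub_iff_add_eq] at h; rw [← h])), zero_smul]
    · simp
  have hdiag : ∀ w : ZMod n → R, diagEnd (L := L) w = Matrix.toLin B B (Matrix.diagonal w) := by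
    intro w
    refine B.ext fun k => ?_
    rw [Matrix.toLin_self, keyD]
    rw [Finset.sum_eq_single k]
    · rw [Matrix.diagonal_apply_eq]
    · intro i _ hi
      rw [Matrix.diagonal_apply_ne _ hi, zero_smul]
    · simp
  -- the product of all the `a i` vanishes
  have hc : ∏ t : ZMod n, a t = 0 := by
    have h0 : (cyclicShift P ^ n) (B 0) = 0 := by
      rw [hB]
      exact hcomp (e 0)
    have h1 : cyclicShift P ^ n = Matrix.toLin B B (shiftM a ^ n) := by
      rw [hTL, hshift, hTL, map_pow]
    have h2 : (shiftM a ^ n) (0 : ZMod n) (0 : ZMod n) = 0 := by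
      have h3 := LinearMap.toMatrix_toLin B B (shiftM a ^ n)
      rw [← h3, LinearMap.toMatrix_apply, ← h1, h0]
      simp
    rw [shiftM_pow, if_pos (by rw [ZMod.natCast_self, sub_zero])] at h2
    have h4 : ∏ t : ZMod n, a ((0 : ZMod n) - t) = ∏ t : ZMod n, a t := by
      rw [← Equiv.prod_comp (Equiv.subLeft (0 : ZMod n)) a]
      rfl
    have h5 : ∏ s ∈ Finset.range n, a ((0 : ZMod n) - (s : ZMod n))
        = ∏ t : ZMod n, a ((0 : ZMod n) - t) :=
      prod_range_zmod (fun t => a ((0 : ZMod n) - t))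
    rw [← h4, ← h5]
    exact h2
  -- put everything together
  have hM : (∑ j ∈ Finset.range n, diagEnd (v j) * cyclicShift P ^ j)
      = Matrix.toLin B B (∑ j ∈ Finset.range n, Matrix.diagonal (v j) * shiftM a ^ j) := by
    rw [hTL, map_sum]
    refine Finset.sum_congr rfl fun j _ => ?_
    rw [map_mul, map_pow, ← hTL, ← hTL, ← hshift, ← hdiag]
  rw [hM, hdiag (v 0), LinearMap.det_toLin, LinearMap.det_toLin, det_sum a v hc,
    Matrix.det_diagonal]
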